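/- For nonnegative integer n, the formal power series F(n,x) = Σ_{k≥0} u_{n+1}^T A_{n+1}^k v_{n+1,1} x^k equals the rational function P_n(−x)/P_{n+1}(x); that is, P_{n+1}(x)·F(n,x) = P_n(−x) as formal power series, where A_{n+1} is the (n+1)×(n+1) unit-primitive matrix and P_m(x) = Σ_{k=0}^{m} (−1)^{⌊3k/2⌋} C(⌊(m+k)/2⌋,k) x^k. -/

import Mathlib

open Matrix Polynomial

/-- The `m × m` unit-primitive matrix: entry `(i,j)` (1-based) is 1 iff `i + j ≤ m + 1`. -/
def A (m : ℕ) : Matrix (Fin m) (Fin m) ℝ :=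
  Matrix.of fun i j => if (i : ℕ) + (j : ℕ) + 1 ≤ m then 1 else 0

/-- The all-ones vector `u_m`. -/
def uvec (m : ℕ) : Fin m → ℝ := fun _ => 1

/-- The first standard basis vector `v_{m,1}`. -/
def v1 (m : ℕ) : Fin m → ℝ := fun i => if (i : ℕ) = 0 then 1 else 0

/-- The polynomial `P_m(x) = ∑_{k=0}^{m} (−1)^{⌊3k/2⌋} C(⌊(m+k)/2⌋,k) x^k`. -/
noncomputable def Ppoly (m : ℕ) : Polynomial ℝ :=
  ∑ k ∈ Finset.range (m + 1),
    Polynomial.C ((-1 : ℝ) ^ (3 * k / 2) * (Nat.choose ((m + k) / 2) k : ℝ)) * Polynomial.X ^ k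

/-- The formal power series `F(n,x) = ∑_{k≥0} (u_{n+1}^T A_{n+1}^k v_{n+1,1}) x^k`. -/
noncomputable def F (n : ℕ) : PowerSeries ℝ :=
  PowerSeries.mk fun k => uvec (n + 1) ⬝ᵥ ((A (n + 1)) ^ k).mulVec (v1 (n + 1))

lemma coeff_Ppoly (m k : ℕ) :
    (Ppoly m).coeff k = (-1 : ℝ) ^ (3 * k / 2) * (Nat.choose ((m + k) / 2) k : ℝ) := by
  rw [Ppoly, Polynomial.finset_sum_coeff]
  simp only [Polynomial.coeff_C_mul, Polynomial.coeff_X_pow, mul_ite, mul_one, mul_zero]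
  rw [Finset.sum_ite_eq (Finset.range (m+1)) k]
  by_cases h : k ∈ Finset.range (m+1)
  · simp [h]
  · simp only [h, if_false]
    have hk : m < k := by
      by_contra hc
      exact h (Finset.mem_range.mpr (by omega))
    have : (m + k)/2 < k := by omega
    rw [Nat.choose_eq_zero_of_lt this]
    simp


lemma comp_negX_coeff (p : Polynomial ℝ) (n : ℕ) :
    (p.comp (-Polynomial.X)).coeff n = (-1 : ℝ) ^ n * p.coeff n := by
  induction p using Polynomial.induction_on' with
  | add p q hp hq => simp [Polynomial.add_comp, hp, hq, mul_add]
  | monomial k a =>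
    rw [Polynomial.monomial_comp]
    have h2 : (-Polynomial.X : Polynomial ℝ) ^ k = Polynomial.C ((-1:ℝ)^k) * Polynomial.X ^ k := by
      rw [neg_pow]
      simp [map_pow]
    rw [h2]
    rw [show Polynomial.C a * (Polynomial.C ((-1:ℝ)^k) * Polynomial.X ^ k)
        = Polynomial.C (a * (-1)^k) * Polynomial.X ^ k by rw [_root_.map_mul]; ring]
    simp only [Polynomial.coeff_C_mul, Polynomial.coeff_monomial, Polynomial.coeff_X_pow]
    by_cases h : n = k
    · subst h; simp; ring
    · simp [h, Ne.symm h]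


lemma neg_one_pow_congr' (s t : ℕ) (h : s % 2 = t % 2) : (-1:ℝ)^s = (-1:ℝ)^t := by
  rcases Nat.even_or_odd s with hs | hs
  · have ht : Even t := by rw [Nat.even_iff] at *; omega
    rw [hs.neg_one_pow, ht.neg_one_pow]
  · have ht : Odd t := by rw [Nat.odd_iff] at *; omega
    rw [hs.neg_one_pow, ht.neg_one_pow]


lemma sign_step (n : ℕ) : (-1 : ℝ) ^ (3 * (n+1) / 2) = (-1)^(n+1) * (-1)^(3*n/2) := by
  rw [← pow_add]
  apply neg_one_pow_congr'
  rcases Nat.even_or_odd n with ⟨a, ha⟩ | ⟨a, ha⟩ <;> subst ha <;> omega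


lemma I1 (M : ℕ) :
    Ppoly (M + 2) = Ppoly M - Polynomial.X * ((Ppoly (M+1)).comp (-Polynomial.X)) := by
  ext n
  rw [Polynomial.coeff_sub, coeff_Ppoly, coeff_Ppoly]
  cases n with
  | zero =>
    simp [Polynomial.mul_coeff_zero]
  | succ n =>
    rw [Polynomial.coeff_X_mul, comp_negX_coeff, coeff_Ppoly]
    have hq : (M + 2 + (n+1)) / 2 = (M + n + 1)/2 + 1 := by omega
    have hq2 : (M + (n+1)) / 2 = (M + n + 1)/2 := by omega
    have hq3 : (M + 1 + n) / 2 = (M + n + 1)/2 := by omega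
    rw [hq, hq2, hq3, Nat.choose_succ_succ ((M+n+1)/2) n, sign_step n]
    push_cast
    ring


lemma Ppoly_zero : Ppoly 0 = 1 := by
  simp [Ppoly]


lemma Ppoly_one : Ppoly 1 = 1 - Polynomial.X := by
  rw [Ppoly]
  rw [Finset.sum_range_succ, Finset.sum_range_one]
  norm_num
  ring


lemma comp_negX_negX (p : Polynomial ℝ) : (p.comp (-Polynomial.X)).comp (-Polynomial.X) = p := by
  rw [Polynomial.comp_assoc]
  simp


lemma I1b (M : ℕ) :
    (Ppoly (M + 2)).comp (-Polynomial.X)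
      = (Ppoly M).comp (-Polynomial.X) + Polynomial.X * Ppoly (M+1) := by
  rw [I1 M, Polynomial.sub_comp, Polynomial.mul_comp, Polynomial.X_comp, comp_negX_negX]
  ring


noncomputable def Rp (m i : ℕ) : Polynomial ℝ :=
  if m ≤ 2*i then Ppoly (2*i - m) else (Ppoly (m - 1 - 2*i)).comp (-Polynomial.X)


noncomputable def Qp (m i : ℕ) : Polynomial ℝ :=
  if i = 0 then Ppoly (m - 2) else Polynomial.X * Rp m i


noncomputable def Ssum (m t : ℕ) : Polynomial ℝ := ∑ j ∈ Finset.range t, Qp m j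


lemma keyR (m i : ℕ) (h1 : 1 ≤ i) (h2 : i + 2 ≤ m) :
    Rp m i = Rp m (i+1) + Polynomial.X * Rp m (m - i - 1) := by
  rcases Nat.lt_or_ge (2*i) (m-1) with hc | hc
  · -- 2i ≤ m - 2 : lower region
    have e1 : Rp m i = (Ppoly (m - 1 - 2*i)).comp (-Polynomial.X) := by
      rw [Rp, if_neg (by omega)]
    have e3 : Rp m (m - i - 1) = Ppoly (m - 2*i - 2) := by
      rw [Rp, if_pos (by omega), show 2*(m-i-1) - m = m - 2*i - 2 by omega]
    rcases Nat.lt_or_ge (2*(i+1)) m with hd | hd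
    · -- genuinely lower next too
      have e2 : Rp m (i+1) = (Ppoly (m - 3 - 2*i)).comp (-Polynomial.X) := by
        rw [Rp, if_neg (by omega), show m - 1 - 2*(i+1) = m - 3 - 2*i by omega]
      rw [e1, e2, e3, show m - 1 - 2*i = (m - 3 - 2*i) + 2 by omega,
        show m - 2*i - 2 = (m - 3 - 2*i) + 1 by omega]
      exact I1b _
    · -- 2(i+1) ≥ m and 2i < m - 1 forces 2i = m - 2, m even
      have hm : m = 2*i + 2 := by omega
      have e2 : Rp m (i+1) = Ppoly 0 := by
        rw [Rp, if_pos (by omega), show 2*(i+1) - m = 0 by omega]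
      rw [e1, e2, e3, show m - 1 - 2*i = 1 by omega, show m - 2*i - 2 = 0 by omega,
        Ppoly_zero, Ppoly_one]
      rw [Polynomial.sub_comp, Polynomial.one_comp, Polynomial.X_comp]
      ring
  · rcases Nat.eq_or_lt_of_le hc with hc2 | hc2
    · -- 2i = m - 1, m odd
      have hm : m = 2*i + 1 := by omega
      have e1 : Rp m i = (Ppoly 0).comp (-Polynomial.X) := by
        rw [Rp, if_neg (by omega), show m - 1 - 2*i = 0 by omega]
      have e2 : Rp m (i+1) = Ppoly 1 := by
        rw [Rp, if_pos (by omega), show 2*(i+1) - m = 1 by omega]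
      have e3 : Rp m (m - i - 1) = (Ppoly 0).comp (-Polynomial.X) := by
        rw [Rp, if_neg (by omega), show m - 1 - 2*(m-i-1) = 0 by omega]
      rw [e1, e2, e3, Ppoly_zero, Ppoly_one, Polynomial.one_comp]
      ring
    · -- 2i ≥ m : upper region
      have e1 : Rp m i = Ppoly (2*i - m) := by rw [Rp, if_pos (by omega)]
      have e2 : Rp m (i+1) = Ppoly (2*i - m + 2) := by
        rw [Rp, if_pos (by omega), show 2*(i+1) - m = 2*i - m + 2 by omega]
      have e3 : Rp m (m - i - 1) = (Ppoly (2*i - m + 1)).comp (-Polynomial.X) := by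
        rw [Rp, if_neg (by omega), show m - 1 - 2*(m-i-1) = 2*i - m + 1 by omega]
      rw [e1, e2, e3, I1 (2*i - m)]
      ring


lemma cL (m t : ℕ) (h1 : 1 ≤ t) (h2 : t ≤ m - 1) : Ssum m t = Rp m (m - t) := by
  induction t with
  | zero => omega
  | succ t ih =>
    rcases Nat.eq_or_lt_of_le h1 with h | h
    · -- t + 1 = 1
      have ht : t = 0 := by omega
      subst ht
      rw [Ssum, Finset.sum_range_one, Qp, if_pos rfl, Rp,
        if_pos (by omega), show 2*(m-1) - m = m - 2 by omega]
    · have ht1 : 1 ≤ t := by omega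
      have ht2 : t ≤ m - 1 := by omega
      rw [Ssum, Finset.sum_range_succ, ← Ssum, ih ht1 ht2, Qp, if_neg (by omega)]
      have := keyR m (m - t - 1) (by omega) (by omega)
      rw [show m - t - 1 + 1 = m - t by omega, show m - (m-t-1) - 1 = t by omega] at this
      rw [show m - (t+1) = m - t - 1 by omega, this]


lemma bL (m : ℕ) (h : 1 ≤ m) : Ssum m m = (Ppoly (m-1)).comp (-Polynomial.X) := by
  rcases Nat.lt_or_ge m 3 with hm | hm
  · interval_cases m
    · rw [Ssum, Finset.sum_range_one, Qp, if_pos rfl]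
      simp [Ppoly_zero]
    · rw [Ssum, Finset.sum_range_succ, Finset.sum_range_one, Qp, if_pos rfl,
        Qp, if_neg (by omega), Rp, if_pos (by omega)]
      norm_num [Ppoly_zero, Ppoly_one, Polynomial.sub_comp, Polynomial.one_comp,
        Polynomial.X_comp]
  · obtain ⟨k, rfl⟩ : ∃ k, m = k + 1 := ⟨m-1, by omega⟩
    rw [Ssum, Finset.sum_range_succ, ← Ssum, cL (k+1) k (by omega) (by omega),
      show k + 1 - k = 1 by omega, Qp, if_neg (by omega), Rp, if_neg (by omega),
      Rp, if_pos (by omega), show k + 1 - 1 - 2*1 = k - 2 by omega,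
      show 2*k - (k+1) = k - 1 by omega]
    have := I1b (k - 2)
    rw [show k - 2 + 2 = k + 1 - 1 by omega, show k - 2 + 1 = k - 1 by omega] at this
    rw [this]


lemma aL (m i : ℕ) (h : i < m) :
    Qp m i = (if i = 0 then Ppoly m else 0) + Polynomial.X * Ssum m (m - i) := by
  rcases Nat.eq_or_lt_of_le (Nat.zero_le i) with h0 | h0
  · -- i = 0
    rw [← h0, if_pos rfl, Nat.sub_zero, bL m (by omega), Qp, if_pos rfl]
    rcases Nat.lt_or_ge m 2 with hm | hm
    · have hm1 : m = 1 := by omega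
      subst hm1
      norm_num [Ppoly_zero, Ppoly_one, Polynomial.one_comp]
    · obtain ⟨k, rfl⟩ : ∃ k, m = k + 2 := ⟨m-2, by omega⟩
      rw [show k + 2 - 2 = k by omega, I1 k, show k + 2 - 1 = k + 1 by omega]
      ring
  · rw [Qp, if_neg (by omega), if_neg (by omega), cL m (m - i) (by omega) (by omega),
      show m - (m - i) = i by omega, zero_add]


lemma rowSum (m : ℕ) (i : Fin m) (f : ℕ → Polynomial ℝ) :
    ∑ j : Fin m, Polynomial.C (A m i j) * f j = ∑ j ∈ Finset.range (m - i), f j := by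
  have h1 : ∀ j : Fin m, Polynomial.C (A m i j) * f j
      = (fun j : ℕ => if (i:ℕ) + j + 1 ≤ m then f j else 0) (j : ℕ) := by
    intro j
    simp only [A, Matrix.of_apply]
    split_ifs with h <;> simp
  rw [Finset.sum_congr rfl (fun j _ => h1 j)]
  rw [Fin.sum_univ_eq_sum_range (fun j : ℕ => if (i:ℕ) + j + 1 ≤ m then f j else 0) m]
  rw [← Finset.sum_range_add_sum_Ico _ (show m - (i:ℕ) ≤ m by omega)]
  have h2 : ∑ j ∈ Finset.Ico (m - (i:ℕ)) m, (if (i:ℕ) + j + 1 ≤ m then f j else 0) = 0 := by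
    apply Finset.sum_eq_zero
    intro j hj
    rw [Finset.mem_Ico] at hj
    rw [if_neg (by omega)]
  rw [h2, add_zero]
  apply Finset.sum_congr rfl
  intro j hj
  rw [Finset.mem_range] at hj
  rw [if_pos (by omega)]

/-- For every `n ≥ 0`: `P_{n+1}(x) · F(n,x) = P_n(−x)` as formal power series,
i.e. `F(n,x) = P_n(−x)/P_{n+1}(x)`. -/
theorem F_eq_P_ratio (n : ℕ) :
    (Ppoly (n + 1) : PowerSeries ℝ) * F n = ((Ppoly n).comp (-Polynomial.X) : PowerSeries ℝ) := by
  set m := n + 1 with hm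
  -- the resolvent vector
  set w : Fin m → PowerSeries ℝ :=
    fun i => PowerSeries.mk fun k => ((A m ^ k).mulVec (v1 m)) i with hw
  -- recursion for w
  have hW : ∀ i : Fin m, w i = PowerSeries.C (v1 m i)
      + PowerSeries.X * ∑ j : Fin m, PowerSeries.C (A m i j) * w j := by
    intro i
    ext k
    cases k with
    | zero =>
      simp only [hw, PowerSeries.coeff_mk, pow_zero, Matrix.one_mulVec, map_add,
        PowerSeries.coeff_zero_eq_constantCoeff, _root_.map_mul]
      simp
    | succ k =>
      rw [map_add, PowerSeries.coeff_C, if_neg (Nat.succ_ne_zero k),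
        PowerSeries.coeff_succ_X_mul, zero_add, map_sum]
      simp only [PowerSeries.coeff_C_mul, hw, PowerSeries.coeff_mk]
      rw [pow_succ']
      rw [← Matrix.mulVec_mulVec]
      simp [Matrix.mulVec, dotProduct]
  -- recursion for Q (power series form)
  have hQ : ∀ i : Fin m, ((Qp m i : Polynomial ℝ) : PowerSeries ℝ)
      = (if (i:ℕ) = 0 then ((Ppoly m : Polynomial ℝ) : PowerSeries ℝ) else 0)
      + PowerSeries.X * ∑ j : Fin m, PowerSeries.C (A m i j) * ((Qp m j : Polynomial ℝ) : PowerSeries ℝ) := by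
    intro i
    have hpoly : Qp m (i : ℕ) = (if (i:ℕ) = 0 then Ppoly m else 0)
        + Polynomial.X * ∑ j : Fin m, Polynomial.C (A m i j) * Qp m (j : ℕ) := by
      rw [rowSum m i (fun j => Qp m j)]
      exact aL m i i.isLt
    calc ((Qp m i : Polynomial ℝ) : PowerSeries ℝ)
        = (((if (i:ℕ) = 0 then Ppoly m else 0)
          + Polynomial.X * ∑ j : Fin m, Polynomial.C (A m i j) * Qp m (j : ℕ) : Polynomial ℝ) : PowerSeries ℝ) := by
          rw [← hpoly]
      _ = _ := by
          push_cast [Polynomial.coe_add, Polynomial.coe_mul, Polynomial.coe_X]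
          congr 1
          · split_ifs <;> simp
          · congr 1
            rw [← Polynomial.coeToPowerSeries.ringHom_apply, map_sum]
            apply Finset.sum_congr rfl
            intro j _
            simp [Polynomial.coeToPowerSeries.ringHom_apply, Polynomial.coe_mul, Polynomial.coe_C]
  -- difference vector
  set D : Fin m → PowerSeries ℝ :=
    fun i => ((Ppoly m : Polynomial ℝ) : PowerSeries ℝ) * w i - ((Qp m i : Polynomial ℝ) : PowerSeries ℝ) with hD
  have hDrec : ∀ i : Fin m, D i = PowerSeries.X * ∑ j : Fin m, PowerSeries.C (A m i j) * D j := by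
    intro i
    have e1 : ((Ppoly m : Polynomial ℝ) : PowerSeries ℝ) * PowerSeries.C (v1 m i)
        = (if (i:ℕ) = 0 then ((Ppoly m : Polynomial ℝ) : PowerSeries ℝ) else 0) := by
      rw [v1]
      split_ifs <;> simp
    have e2 : ∑ j : Fin m, PowerSeries.C (A m i j) * D j
        = ((Ppoly m : Polynomial ℝ) : PowerSeries ℝ)
            * (∑ j : Fin m, PowerSeries.C (A m i j) * w j)
          - ∑ j : Fin m, PowerSeries.C (A m i j) * ((Qp m j : Polynomial ℝ) : PowerSeries ℝ) := by
      rw [Finset.mul_sum, ← Finset.sum_sub_distrib]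
      apply Finset.sum_congr rfl
      intro j _
      rw [hD]
      ring
    rw [hD]
    simp only
    rw [e2, hW i, hQ i, mul_add, e1]
    ring
  have hDzero : ∀ k : ℕ, ∀ i : Fin m, PowerSeries.coeff k (D i) = 0 := by
    intro k
    induction k with
    | zero =>
      intro i
      rw [hDrec i]
      simp [PowerSeries.coeff_zero_eq_constantCoeff]
    | succ k ih =>
      intro i
      rw [hDrec i, PowerSeries.coeff_succ_X_mul, map_sum]
      simp only [PowerSeries.coeff_C_mul]
      exact Finset.sum_eq_zero fun j _ => by rw [ih j, mul_zero]
  have hPQ : ∀ i : Fin m, ((Ppoly m : Polynomial ℝ) : PowerSeries ℝ) * w i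
      = ((Qp m i : Polynomial ℝ) : PowerSeries ℝ) := by
    intro i
    have : D i = 0 := PowerSeries.ext fun k => by rw [hDzero k i, map_zero]
    rw [hD] at this
    simp only at this
    exact sub_eq_zero.mp this
  -- F as sum of w
  have hF : F n = ∑ i : Fin m, w i := by
    ext k
    rw [map_sum]
    simp only [hw, PowerSeries.coeff_mk, F, uvec, dotProduct, one_mul]
    rfl
  rw [hF, Finset.mul_sum]
  rw [Finset.sum_congr rfl (fun i _ => hPQ i)]
  have hsum : ∑ i : Fin m, ((Qp m (i:ℕ) : Polynomial ℝ) : PowerSeries ℝ)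
      = ((Ssum m m : Polynomial ℝ) : PowerSeries ℝ) := by
    simp only [← Polynomial.coeToPowerSeries.ringHom_apply]
    rw [← map_sum]
    congr 1
    rw [Ssum]
    exact Fin.sum_univ_eq_sum_range (fun j => Qp m j) m
  rw [hsum, bL m (by omega)]
  norm_num [hm]
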